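/- Let H be a finite-dimensional complex inner product space, let Π and Δ be orthogonal projections on H, let θ be a real number, and define the partial rotation U(θ) = I − (1 − e^{iθ})(I − Δ). Let ψ ∈ ker Π and set w = (Π − ΠΔΠ)⁺ Δ ψ. Then w ∈ im Π, and U(θ)(ψ + w) = (I − (1 − e^{iθ}) P_{ker Π ∩ ker Δ}) ψ + w. -/

import Mathlib

open LinearMap

/-- The orthogonal projection onto a submodule, as an endomorphism of the ambient space. -/
noncomputable def projL {H : Type*} [NormedAddCommGroup H] [InnerProductSpace ℂ H]
    (K : Submodule ℂ H) [K.HasOrthogonalProjection] : H →ₗ[ℂ] H :=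
  K.subtype ∘ₗ (K.orthogonalProjectionOnto).toLinearMap

/-- The four Moore–Penrose equations: `B` is the Moore–Penrose pseudoinverse of `A`. -/
def IsMPInv {H : Type*} [NormedAddCommGroup H] [InnerProductSpace ℂ H]
    [FiniteDimensional ℂ H] (A B : H →ₗ[ℂ] H) : Prop :=
  A ∘ₗ B ∘ₗ A = A ∧ B ∘ₗ A ∘ₗ B = B ∧
    adjoint (A ∘ₗ B) = A ∘ₗ B ∧ adjoint (B ∘ₗ A) = B ∘ₗ A

open scoped InnerProductSpace

section Aux
variable {H : Type*} [NormedAddCommGroup H] [InnerProductSpace ℂ H]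
    [FiniteDimensional ℂ H]

lemma aux_fix (Dl : H →ₗ[ℂ] H) (hDl : Dl ∘ₗ Dl = Dl) (hDla : adjoint Dl = Dl)
    (v : H) (h : ⟪v, v⟫_ℂ = ⟪v, Dl v⟫_ℂ) : Dl v = v := by
  have hsa : ∀ x y : H, ⟪Dl x, y⟫_ℂ = ⟪x, Dl y⟫_ℂ := by
    intro x y
    conv_lhs => rw [← hDla]
    exact adjoint_inner_left Dl y x
  have hid : ∀ x : H, Dl (Dl x) = Dl x := fun x => congrFun (congrArg DFunLike.coe hDl) x
  have hz : ⟪Dl v - v, Dl v - v⟫_ℂ = 0 := by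
    rw [inner_sub_left, inner_sub_right, inner_sub_right]
    have h1 : ⟪Dl v, Dl v⟫_ℂ = ⟪v, Dl v⟫_ℂ := by rw [hsa, hid]
    have h2 : ⟪Dl v, v⟫_ℂ = ⟪v, Dl v⟫_ℂ := hsa v v
    rw [h1, h2, ← h]; ring
  exact sub_eq_zero.mp (inner_self_eq_zero.mp hz)

end Aux

/-- Partial-rotation effective gap transducer: `U(θ) = I − (1 − e^{iθ})(I − Δ)` transduces
`ψ ∈ ker Π` into `(I − (1 − e^{iθ}) P_{ker Π ∩ ker Δ}) ψ` with catalyst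
`w = (Π − ΠΔΠ)⁺ Δ ψ ∈ im Π`. -/
theorem stmt1 {H : Type*} [NormedAddCommGroup H] [InnerProductSpace ℂ H]
    [FiniteDimensional ℂ H]
    (Pr Dl : H →ₗ[ℂ] H)
    (hPr : Pr ∘ₗ Pr = Pr) (hPra : adjoint Pr = Pr)
    (hDl : Dl ∘ₗ Dl = Dl) (hDla : adjoint Dl = Dl)
    (θ : ℝ)
    (B : H →ₗ[ℂ] H) (hB : IsMPInv (Pr - Pr ∘ₗ Dl ∘ₗ Pr) B)
    (ψ : H) (hψ : ψ ∈ ker Pr)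
    (w : H) (hw : w = B (Dl ψ))
    (U : H →ₗ[ℂ] H)
    (hU : U = LinearMap.id - (1 - Complex.exp (θ * Complex.I)) • (LinearMap.id - Dl)) :
    w ∈ range Pr ∧
      U (ψ + w) =
        ((LinearMap.id - (1 - Complex.exp (θ * Complex.I)) • projL (ker Pr ⊓ ker Dl) :
          H →ₗ[ℂ] H)) ψ + w := by
  set A : H →ₗ[ℂ] H := Pr - Pr ∘ₗ Dl ∘ₗ Pr with hA
  obtain ⟨h1, h2, h3, h4⟩ := hB
  have hPr' : ∀ x, Pr (Pr x) = Pr x := fun x => congrFun (congrArg DFunLike.coe hPr) x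
  have hDl' : ∀ x, Dl (Dl x) = Dl x := fun x => congrFun (congrArg DFunLike.coe hDl) x
  have hPrsa : ∀ x y : H, ⟪Pr x, y⟫_ℂ = ⟪x, Pr y⟫_ℂ := by
    intro x y
    conv_lhs => rw [← hPra]
    exact adjoint_inner_left Pr y x
  have hDlsa : ∀ x y : H, ⟪Dl x, y⟫_ℂ = ⟪x, Dl y⟫_ℂ := by
    intro x y
    conv_lhs => rw [← hDla]
    exact adjoint_inner_left Dl y x
  have hψ0 : Pr ψ = 0 := hψ
  have hAx : ∀ x, A x = Pr x - Pr (Dl (Pr x)) := fun x => rfl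
  have hAadj : adjoint A = A := by
    rw [hA, map_sub, hPra, adjoint_comp, adjoint_comp, hPra, hDla, comp_assoc]
  have hAsa : ∀ x y : H, ⟪A x, y⟫_ℂ = ⟪x, A y⟫_ℂ := by
    intro x y
    conv_lhs => rw [← hAadj]
    exact adjoint_inner_left A y x
  have hPrA : ∀ x, Pr (A x) = A x := by
    intro x; simp only [hAx, map_sub, hPr']
  have hAPr : ∀ x, A (Pr x) = A x := by
    intro x; simp only [hAx, hPr']
  have f1 : ∀ x, A (B (A x)) = A x := fun x => congrFun (congrArg DFunLike.coe h1) x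
  have f2 : ∀ x, B (A (B x)) = B x := fun x => congrFun (congrArg DFunLike.coe h2) x
  have hABsa : ∀ x y : H, ⟪A (B x), y⟫_ℂ = ⟪x, A (B y)⟫_ℂ := by
    intro x y
    conv_lhs => rw [show A (B x) = (A ∘ₗ B) x from rfl, ← h3, adjoint_inner_left]
    rfl
  have hABc : ∀ x, A (B x) = adjoint B (A x) := by
    have : A ∘ₗ B = adjoint B ∘ₗ A := by
      conv_lhs => rw [← h3]
      rw [adjoint_comp, hAadj]
    exact fun x => congrFun (congrArg DFunLike.coe this) x
  have hBAc : ∀ x, B (A x) = A (adjoint B x) := by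
    have : B ∘ₗ A = A ∘ₗ adjoint B := by
      conv_lhs => rw [← h4]
      rw [adjoint_comp, hAadj]
    exact fun x => congrFun (congrArg DFunLike.coe this) x
  -- kernel argument
  have kerA_fix : ∀ d, A d = 0 → Dl (Pr d) = Pr d := by
    intro d hd
    apply aux_fix Dl hDl hDla
    have h0 : Pr d - Pr (Dl (Pr d)) = 0 := by rw [← hAx d, hd]
    have hpd : Pr d = Pr (Dl (Pr d)) := sub_eq_zero.mp h0
    calc ⟪Pr d, Pr d⟫_ℂ = ⟪Pr d, Pr (Dl (Pr d))⟫_ℂ := by rw [← hpd]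
      _ = ⟪Pr (Pr d), Dl (Pr d)⟫_ℂ := (hPrsa (Pr d) (Dl (Pr d))).symm
      _ = ⟪Pr d, Dl (Pr d)⟫_ℂ := by rw [hPr']
  -- key fixed point: A (B y) = y for y = Pr (Dl ψ)
  set y : H := Pr (Dl ψ) with hy
  set d : H := y - A (B y) with hdd
  have hABd : A (B d) = 0 := by
    simp only [hdd, map_sub, f1, sub_self]
  have hAd : A d = 0 := by
    have hz : ⟪A d, A d⟫_ℂ = 0 := by
      calc ⟪A d, A d⟫_ℂ = ⟪d, A (A d)⟫_ℂ := hAsa d (A d)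
        _ = ⟪d, A (B (A (A d)))⟫_ℂ := by rw [f1]
        _ = ⟪A (B d), A (A d)⟫_ℂ := (hABsa d (A (A d))).symm
        _ = 0 := by rw [hABd, inner_zero_left]
    exact inner_self_eq_zero.mp hz
  have hDlPrd : Dl (Pr d) = Pr d := kerA_fix d hAd
  have hyd : ⟪y, d⟫_ℂ = 0 := by
    calc ⟪y, d⟫_ℂ = ⟪Pr (Dl ψ), d⟫_ℂ := by rw [hy]
      _ = ⟪Dl ψ, Pr d⟫_ℂ := hPrsa _ _
      _ = ⟪ψ, Dl (Pr d)⟫_ℂ := hDlsa _ _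
      _ = ⟪ψ, Pr d⟫_ℂ := by rw [hDlPrd]
      _ = ⟪Pr ψ, d⟫_ℂ := (hPrsa _ _).symm
      _ = 0 := by rw [hψ0, inner_zero_left]
  have hd0 : d = 0 := by
    have h5 : ⟪A (B y), d⟫_ℂ = 0 := by rw [hABsa, hABd, inner_zero_right]
    have hz : ⟪d, d⟫_ℂ = 0 := by
      calc ⟪d, d⟫_ℂ = ⟪y, d⟫_ℂ - ⟪A (B y), d⟫_ℂ := by rw [hdd, inner_sub_left]
        _ = 0 := by rw [hyd, h5, sub_zero]
    exact inner_self_eq_zero.mp hz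
  have hABy : A (B y) = y := by
    have := sub_eq_zero.mp (hdd ▸ hd0)
    exact this.symm
  -- A w = Pr (Dl ψ)
  have hAw : A w = y := by
    rw [hw, hABc, ← hAPr (Dl ψ), ← hy, ← hABc, hABy]
  -- Pr w = w
  have hPrw : Pr w = w := by
    have hwBA : w = A (adjoint B w) := by
      conv_lhs => rw [hw, ← f2 (Dl ψ), ← hw]
      rw [hBAc]
    conv_lhs => rw [hwBA]
    rw [hPrA, ← hwBA]
  refine ⟨⟨w, hPrw⟩, ?_⟩
  -- the transduced state
  have hPDw : y = w - Pr (Dl w) := by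
    rw [← hAw, hAx, hPrw]
  have hPrx : Pr ((ψ + w) - Dl (ψ + w)) = 0 := by
    have : Pr ((ψ + w) - Dl (ψ + w)) = Pr ψ + Pr w - (Pr (Dl ψ) + Pr (Dl w)) := by
      simp [map_add, map_sub]
    rw [this, hψ0, hPrw, ← hy, hPDw]
    abel
  have hDlx : Dl ((ψ + w) - Dl (ψ + w)) = 0 := by
    simp [map_sub, hDl']
  have hxK : (ψ + w) - Dl (ψ + w) ∈ ker Pr ⊓ ker Dl := by
    exact Submodule.mem_inf.mpr ⟨hPrx, hDlx⟩
  have hproj : projL (ker Pr ⊓ ker Dl) ψ = (ψ + w) - Dl (ψ + w) := by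
    have := Submodule.eq_starProjection_of_mem_of_inner_eq_zero (K := ker Pr ⊓ ker Dl)
      (u := ψ) hxK ?_
    · exact this
    · intro z hz
      obtain ⟨hz1, hz2⟩ := Submodule.mem_inf.mp hz
      have hz1' : Pr z = 0 := hz1
      have hz2' : Dl z = 0 := hz2
      have : ψ - ((ψ + w) - Dl (ψ + w)) = Dl (ψ + w) - w := by abel
      rw [this, inner_sub_left, hDlsa, hz2', inner_zero_right, ← hPrw, hPrsa, hz1',
        inner_zero_right, sub_zero]
  rw [hU]
  simp only [LinearMap.sub_apply, LinearMap.smul_apply, id_apply, hproj]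
  abel
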